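/- If n ≡ 1 (mod 3) and n ≥ 4, then the number of minimum dominating sets of the path P_n equals (n+2)(n+11)/18 − 1; equivalently, writing n = 3k+1, ζ(P_n) = (k^2 + 5k + 2)/2. -/

import Mathlib

open Finset SimpleGraph

/-- `S` is a dominating set of `G`: every vertex outside `S` has a neighbor in `S`. -/
def domSet {V : Type*} (G : SimpleGraph V) (S : Finset V) : Prop :=
  ∀ v, v ∉ S → ∃ u ∈ S, G.Adj u v

/-- The domination number `γ(G)`: least cardinality of a dominating set. -/
noncomputable def domNum {V : Type*} [Fintype V] (G : SimpleGraph V) : ℕ :=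
  sInf {k | ∃ S : Finset V, domSet G S ∧ S.card = k}

/-- The dominion `ζ(G)`: the number of dominating sets of minimum cardinality. -/
noncomputable def dominion {V : Type*} [Fintype V] (G : SimpleGraph V) : ℕ :=
  Nat.card {S : Finset V // domSet G S ∧ S.card = domNum G}

namespace Stmt8Aux

def sfun (p q i : ℕ) : ℕ := if i < p then 3*i+1 else if i < q then 3*i else 3*i - 1

lemma sfun_ub (p q i : ℕ) : sfun p q i ≤ 3*i+1 := by
  unfold sfun; split; · omega
  split <;> omega

lemma sfun_lb {p q : ℕ} (hpq : p ≤ q) (hq1 : 1 ≤ q) (i : ℕ) : 3*i ≤ sfun p q i + 1 := by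
  unfold sfun; split; · omega
  split <;> omega

lemma sfun_lt {p q : ℕ} (hpq : p ≤ q) (hq1 : 1 ≤ q) {i j : ℕ} (hij : i < j) :
    sfun p q i < sfun p q j := by
  have h1 := sfun_ub p q i
  have h2 := sfun_lb hpq hq1 j
  omega

lemma sfun_lt_n {k p q i : ℕ} (hp : p ≤ k) (hi : i ≤ k) : sfun p q i < 3*k+1 := by
  unfold sfun; split; · omega
  split <;> omega

def nset (k p q : ℕ) : Finset ℕ := (range (k+1)).image (sfun p q)

lemma mem_nset {k p q m : ℕ} : m ∈ nset k p q ↔ ∃ i ≤ k, sfun p q i = m := by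
  simp [nset, Nat.lt_succ_iff]

lemma nset_card {k p q : ℕ} (hpq : p ≤ q) (hq1 : 1 ≤ q) : (nset k p q).card = k+1 := by
  rw [nset, card_image_of_injOn, card_range]
  intro a _ b _ hab
  by_contra hne
  rcases Nat.lt_or_ge a b with h | h
  · exact absurd hab (Nat.ne_of_lt (sfun_lt hpq hq1 h))
  · exact absurd hab.symm (Nat.ne_of_lt (sfun_lt hpq hq1 (by omega)))

def fset (k p q : ℕ) : Finset (Fin (3*k+1)) := univ.filter (fun v => v.val ∈ nset k p q)

lemma mem_fset {k p q : ℕ} {v : Fin (3*k+1)} : v ∈ fset k p q ↔ v.val ∈ nset k p q := by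
  simp [fset]

lemma fset_card {k p q : ℕ} (hpq : p ≤ q) (hq1 : 1 ≤ q) (hp : p ≤ k) :
    (fset k p q).card = k+1 := by
  have hb : ∀ m ∈ nset k p q, m < 3*k+1 := by
    intro m hm; rcases mem_nset.1 hm with ⟨i, hi, rfl⟩; exact sfun_lt_n hp hi
  have : fset k p q = (nset k p q).attachFin hb := by
    ext v; rw [mem_fset, mem_attachFin]
  rw [this, card_attachFin, nset_card hpq hq1]

-- downclosed finsets of ℕ
lemma downclosed_eq_range (t : Finset ℕ) (h : ∀ a b : ℕ, a ≤ b → b ∈ t → a ∈ t) :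
    t = range t.card := by
  have hx : ∀ x ∈ t, x < t.card := by
    intro x hx
    have hsub : range (x+1) ⊆ t := by
      intro y hy
      exact h y x (by have := mem_range.1 hy; omega) hx
    have := card_le_card hsub
    rw [card_range] at this
    omega
  exact (eq_of_subset_of_card_le (fun x hx' => mem_range.2 (hx x hx')) (by simp))


lemma fset_dom {k p q : ℕ} (hpq : p ≤ q) (hq1 : 1 ≤ q) (hp : p ≤ k) (hq : q ≤ k+1) :
    domSet (pathGraph (3*k+1)) (fset k p q) := by
  intro v hv
  have hvn : (v : ℕ) < 3*k+1 := v.isLt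
  set m := (v : ℕ) with hm
  have hnot : ∀ i ≤ k, sfun p q i ≠ m := by
    intro i hi hEq
    exact hv (mem_fset.2 (mem_nset.2 ⟨i, hi, hEq⟩))
  -- helper to produce a dominator from an index
  have key : ∀ i ≤ k, (sfun p q i + 1 = m ∨ m + 1 = sfun p q i) →
      ∃ u ∈ fset k p q, (pathGraph (3*k+1)).Adj u v := by
    intro i hi hadj
    refine ⟨⟨sfun p q i, sfun_lt_n hp hi⟩, mem_fset.2 (mem_nset.2 ⟨i, hi, rfl⟩), ?_⟩
    rw [pathGraph_adj]
    simpa using hadj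
  set i := m / 3 with hi3
  have him : 3 * i ≤ m ∧ m < 3 * i + 3 := by omega
  have hik : i ≤ k := by omega
  rcases Nat.lt_trichotomy (m % 3) 1 with hr | hr | hr
  · -- m = 3i
    have hmi : m = 3 * i := by omega
    by_cases hip : i < p
    · refine key i hik ?_
      unfold sfun; rw [if_pos hip]; omega
    · by_cases hiq : i < q
      · exact absurd (by unfold sfun; rw [if_neg hip, if_pos hiq]; omega) (hnot i hik)
      · refine key i hik ?_
        unfold sfun; rw [if_neg hip, if_neg hiq]; omega
  · -- m = 3i+1
    have hmi : m = 3 * i + 1 := by omega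
    by_cases hip : i < p
    · exact absurd (by unfold sfun; rw [if_pos hip]; omega) (hnot i hik)
    · by_cases hiq : i < q
      · refine key i hik ?_
        unfold sfun; rw [if_neg hip, if_pos hiq]; omega
      · -- i ≥ q : use i+1, sfun (i+1) = 3i+2
        have hik' : i + 1 ≤ k := by omega
        refine key (i+1) hik' ?_
        unfold sfun
        rw [if_neg (by omega), if_neg (by omega)]
        omega
  · -- m = 3i+2
    have hmi : m = 3 * i + 2 := by omega
    have hik' : i + 1 ≤ k := by omega
    by_cases hip : i + 1 < p
    · -- use i : sfun i = 3i+1 = m-1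
      refine key i hik ?_
      unfold sfun; rw [if_pos (by omega)]; omega
    · by_cases hiq : i + 1 < q
      · refine key (i+1) hik' ?_
        unfold sfun; rw [if_neg hip, if_pos hiq]; omega
      · -- sfun (i+1) = 3i+2 = m : contradiction
        exact absurd (by unfold sfun; rw [if_neg hip, if_neg hiq]; omega) (hnot (i+1) hik')

lemma structure_thm {k : ℕ} (S : Finset (Fin (3*k+1)))
    (hd : domSet (pathGraph (3*k+1)) S) (hc : S.card = k+1) :
    ∃ p q, p ≤ q ∧ 1 ≤ q ∧ p ≤ k ∧ q ≤ k+1 ∧ S = fset k p q := by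
  classical
  set e := S.orderEmbOfFin hc with he
  set s : ℕ → ℕ := fun i => if h : i < k+1 then ((e ⟨i, h⟩ : Fin (3*k+1)) : ℕ) else 3*i+5 with hs
  have hsval : ∀ (i : ℕ) (h : i < k+1), s i = ((e ⟨i, h⟩ : Fin (3*k+1)) : ℕ) := by
    intro i h; simp only [hs, dif_pos h]
  have hslt : ∀ i ≤ k, s i < 3*k+1 := by
    intro i hi
    have h : i < k+1 := by omega
    rw [hsval i h]; exact (e ⟨i, h⟩).isLt
  have hmem : ∀ i ≤ k, ∀ (hv : s i < 3*k+1), (⟨s i, hv⟩ : Fin (3*k+1)) ∈ S := by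
    intro i hi hv
    have h : i < k+1 := by omega
    have hm := S.orderEmbOfFin_mem hc ⟨i, h⟩
    have : (⟨s i, hv⟩ : Fin (3*k+1)) = e ⟨i, h⟩ := Fin.ext (hsval i h)
    rw [this]; exact hm
  have hmono : ∀ a b : ℕ, a < b → b ≤ k → s a < s b := by
    intro a b hab hb
    have ha' : a < k+1 := by omega
    have hb' : b < k+1 := by omega
    rw [hsval a ha', hsval b hb']
    exact e.strictMono (show (⟨a, ha'⟩ : Fin (k+1)) < ⟨b, hb'⟩ from hab)
  have hsurj : ∀ v ∈ S, ∃ j : ℕ, j ≤ k ∧ v.val = s j := by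
    intro v hv
    have hr : v ∈ Set.range e := by
      rw [he, S.range_orderEmbOfFin hc]; exact hv
    obtain ⟨j, hj⟩ := hr
    exact ⟨j.val, by omega, by rw [hsval j.val (by omega)]; rw [← hj]⟩
  have hbtw : ∀ (i : ℕ), i+1 ≤ k → ∀ v : Fin (3*k+1), v ∈ S →
      s i < v.val → v.val < s (i+1) → False := by
    intro i h1 v hv hlo hhi
    obtain ⟨j, hj, hvj⟩ := hsurj v hv
    rw [hvj] at hlo hhi
    have hij : i < j := by
      by_contra hle
      rcases Nat.lt_or_ge j i with h | h
      · exact absurd hlo (by have := hmono j i h (by omega); omega)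
      · have hji' : j = i := by omega
        rw [hji'] at hlo; omega
    have hji : j < i+1 := by
      by_contra hle
      rcases Nat.lt_or_ge (i+1) j with h | h
      · exact absurd hhi (by have := hmono (i+1) j h hj; omega)
      · have hji' : j = i+1 := by omega
        rw [hji'] at hhi; omega
    omega
  have hgap : ∀ i : ℕ, i+1 ≤ k → s (i+1) ≤ s i + 3 := by
    intro i h1
    by_contra hcon
    push_neg at hcon
    have hwlt : s i + 2 < 3*k+1 := by
      have := hslt (i+1) h1; omega
    set w : Fin (3*k+1) := ⟨s i + 2, hwlt⟩ with hw
    have hwval : (w : ℕ) = s i + 2 := rfl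
    have hwS : w ∉ S := fun hmemw => hbtw i h1 w hmemw (by omega) (by omega)
    obtain ⟨u, huS, hadj⟩ := hd w hwS
    rw [pathGraph_adj] at hadj
    rw [hwval] at hadj
    exact hbtw i h1 u huS (by omega) (by omega)
  have hge0 : ∀ v ∈ S, s 0 ≤ v.val := by
    intro v hv
    obtain ⟨j, hj, hvj⟩ := hsurj v hv
    rcases Nat.eq_zero_or_pos j with h | h
    · rw [h] at hvj; omega
    · have := hmono 0 j h hj; omega
  have hlek : ∀ v ∈ S, v.val ≤ s k := by
    intro v hv
    obtain ⟨j, hj, hvj⟩ := hsurj v hv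
    rcases Nat.lt_or_ge j k with h | h
    · have := hmono j k h (le_refl k); omega
    · have hjk : j = k := by omega
      rw [hjk] at hvj; omega
  have hleft : s 0 ≤ 1 := by
    by_contra hcon
    push_neg at hcon
    have h0 : (0:ℕ) < 3*k+1 := by omega
    have h0S : (⟨0, h0⟩ : Fin (3*k+1)) ∉ S := by
      intro hmem0
      have := hge0 _ hmem0
      simp at this
      omega
    obtain ⟨u, huS, hadj⟩ := hd ⟨0, h0⟩ h0S
    rw [pathGraph_adj] at hadj
    have := hge0 u huS
    simp at hadj
    omega
  have hright : 3*k ≤ s k + 1 := by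
    by_contra hcon
    push_neg at hcon
    have h0 : 3*k < 3*k+1 := by omega
    have h0S : (⟨3*k, h0⟩ : Fin (3*k+1)) ∉ S := by
      intro hmem0
      have := hlek _ hmem0
      simp at this
      omega
    obtain ⟨u, huS, hadj⟩ := hd ⟨3*k, h0⟩ h0S
    rw [pathGraph_adj] at hadj
    have h1 := hlek u huS
    have h2 := u.isLt
    simp at hadj
    omega
  have hub : ∀ i ≤ k, s i ≤ 3*i + 1 := by
    intro i
    induction i with
    | zero => intro _; omega
    | succ m ih =>
      intro h
      have h1 := hgap m h
      have h2 := ih (by omega)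
      omega
  have hlb : ∀ i ≤ k, 3*i ≤ s i + 1 := by
    have haux : ∀ d i, i + d = k → 3*i ≤ s i + 1 := by
      intro d
      induction d with
      | zero => intro i hi; rw [show i = k by omega]; exact hright
      | succ m ih =>
        intro i hik
        have h1 : i + 1 ≤ k := by omega
        have h2 := hgap i h1
        have h3 := ih (i+1) (by omega)
        omega
    intro i hi
    exact haux (k-i) i (by omega)
  -- define p and q
  set A := (range (k+1)).filter (fun i => 3*i+1 ≤ s i) with hA
  set B := (range (k+1)).filter (fun i => 3*i ≤ s i) with hB
  have hAdc : ∀ a b : ℕ, a ≤ b → b ∈ A → a ∈ A := by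
    have hstep : ∀ i, i+1 ≤ k → 3*(i+1)+1 ≤ s (i+1) → 3*i+1 ≤ s i := by
      intro i h1 h2
      have := hgap i h1; omega
    have key : ∀ d a b, a + d = b → b ∈ A → a ∈ A := by
      intro d
      induction d with
      | zero => intro a b h hb; rwa [show a = b by omega]
      | succ m ih =>
        intro a b h hb
        have ha1 : (a+1) ∈ A := ih (a+1) b (by omega) hb
        rw [hA, mem_filter, mem_range] at ha1 ⊢
        exact ⟨by omega, hstep a (by omega) ha1.2⟩
    intro a b hab hb
    exact key (b - a) a b (by omega) hb
  have hBdc : ∀ a b : ℕ, a ≤ b → b ∈ B → a ∈ B := by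
    have hstep : ∀ i, i+1 ≤ k → 3*(i+1) ≤ s (i+1) → 3*i ≤ s i := by
      intro i h1 h2
      have := hgap i h1; omega
    have key : ∀ d a b, a + d = b → b ∈ B → a ∈ B := by
      intro d
      induction d with
      | zero => intro a b h hb; rwa [show a = b by omega]
      | succ m ih =>
        intro a b h hb
        have ha1 : (a+1) ∈ B := ih (a+1) b (by omega) hb
        rw [hB, mem_filter, mem_range] at ha1 ⊢
        exact ⟨by omega, hstep a (by omega) ha1.2⟩
    intro a b hab hb
    exact key (b - a) a b (by omega) hb
  set p := A.card with hpdef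
  set q := B.card with hqdef
  have hA_eq : A = range p := downclosed_eq_range A hAdc
  have hB_eq : B = range q := downclosed_eq_range B hBdc
  have hiA : ∀ i ≤ k, (i < p ↔ 3*i+1 ≤ s i) := by
    intro i hi
    rw [← mem_range, ← hA_eq, hA, mem_filter, mem_range]
    constructor
    · exact fun h => h.2
    · exact fun h => ⟨by omega, h⟩
  have hiB : ∀ i ≤ k, (i < q ↔ 3*i ≤ s i) := by
    intro i hi
    rw [← mem_range, ← hB_eq, hB, mem_filter, mem_range]
    constructor
    · exact fun h => h.2
    · exact fun h => ⟨by omega, h⟩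
  have hp_le : p ≤ k := by
    by_contra hcon
    have h1 := (hiA k (le_refl k)).1 (by omega)
    have := hslt k (le_refl k)
    omega
  have hq1 : 1 ≤ q := by
    have := (hiB 0 (by omega)).2 (by omega)
    omega
  have hpq : p ≤ q := by
    rw [hpdef, hqdef]
    apply card_le_card
    intro x hx
    rw [hA, mem_filter] at hx
    rw [hB, mem_filter]
    exact ⟨hx.1, by omega⟩
  have hqk : q ≤ k+1 := by
    rw [hqdef, hB]
    calc ((range (k+1)).filter _).card ≤ (range (k+1)).card := card_filter_le _ _
    _ = k+1 := card_range _
  have hval : ∀ i ≤ k, s i = sfun p q i := by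
    intro i hi
    unfold sfun
    by_cases h1 : i < p
    · rw [if_pos h1]
      have := (hiA i hi).1 h1
      have := hub i hi
      omega
    · rw [if_neg h1]
      by_cases h2 : i < q
      · rw [if_pos h2]
        have := (hiB i hi).1 h2
        have : ¬ (3*i+1 ≤ s i) := fun hcc => h1 ((hiA i hi).2 hcc)
        omega
      · rw [if_neg h2]
        have hx : ¬ (3*i ≤ s i) := fun hcc => h2 ((hiB i hi).2 hcc)
        have := hlb i hi
        omega
  refine ⟨p, q, hpq, hq1, hp_le, hqk, ?_⟩
  have hsub : fset k p q ⊆ S := by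
    intro v hv
    rcases mem_nset.1 (mem_fset.1 hv) with ⟨i, hi, hEq⟩
    have hvlt := hslt i hi
    have hvS := hmem i hi hvlt
    have hveq : v = ⟨s i, hvlt⟩ := Fin.ext (((hval i hi).trans hEq).symm)
    rw [hveq]; exact hvS
  exact (eq_of_subset_of_card_le hsub (by rw [hc, fset_card hpq hq1 hp_le])).symm

lemma fset_inj {k p q p' q' : ℕ} (hpq : p ≤ q) (hq1 : 1 ≤ q) (hp : p ≤ k) (hq : q ≤ k+1)
    (hpq' : p' ≤ q') (hq1' : 1 ≤ q') (hp' : p' ≤ k) (hq' : q' ≤ k+1)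
    (h : fset k p q = fset k p' q') : p = p' ∧ q = q' := by
  have hn : nset k p q = nset k p' q' := by
    ext m
    constructor
    · intro hm
      have hb : m < 3*k+1 := by
        rcases mem_nset.1 hm with ⟨i, hi, rfl⟩; exact sfun_lt_n hp hi
      have h2 : (⟨m, hb⟩ : Fin (3*k+1)) ∈ fset k p q := mem_fset.2 hm
      rw [h] at h2
      exact mem_fset.1 h2
    · intro hm
      have hb : m < 3*k+1 := by
        rcases mem_nset.1 hm with ⟨i, hi, rfl⟩; exact sfun_lt_n hp' hi
      have h2 : (⟨m, hb⟩ : Fin (3*k+1)) ∈ fset k p' q' := mem_fset.2 hm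
      rw [← h] at h2
      exact mem_fset.1 h2
  have hcard : (nset k p q).card = k+1 := nset_card hpq hq1
  have hfun : ∀ i ≤ k, sfun p q i = sfun p' q' i := by
    have hmono1 : StrictMono (fun i : Fin (k+1) => sfun p q i.val) := by
      intro a b hab
      exact sfun_lt hpq hq1 (show a.val < b.val from hab)
    have hmono2 : StrictMono (fun i : Fin (k+1) => sfun p' q' i.val) := by
      intro a b hab
      exact sfun_lt hpq' hq1' (show a.val < b.val from hab)
    have h1 : (fun i : Fin (k+1) => sfun p q i.val) = (nset k p q).orderEmbOfFin hcard :=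
      orderEmbOfFin_unique hcard (fun i => mem_nset.2 ⟨i.val, by omega, rfl⟩) hmono1
    have h2 : (fun i : Fin (k+1) => sfun p' q' i.val) = (nset k p q).orderEmbOfFin hcard :=
      orderEmbOfFin_unique hcard
        (fun i => by rw [hn]; exact mem_nset.2 ⟨i.val, by omega, rfl⟩) hmono2
    intro i hi
    have := (congrFun h1 ⟨i, by omega⟩).trans (congrFun h2 ⟨i, by omega⟩).symm
    simpa using this
  have keyp : ∀ P Q P' Q' : ℕ, P < P' → sfun P Q P = sfun P' Q' P → False := by
    intro P Q P' Q' h2 h4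
    unfold sfun at h4
    rw [if_neg (lt_irrefl P), if_pos h2] at h4
    split at h4 <;> omega
  have hpp : p = p' := by
    rcases Nat.lt_trichotomy p p' with hlt | hEq | hgt
    · exact absurd (hfun p hp) (fun hc => keyp p q p' q' hlt hc)
    · exact hEq
    · exact absurd (hfun p' hp').symm (fun hc => keyp p' q' p q hgt hc)
  subst hpp
  have keyq : ∀ Q Q' : ℕ, p ≤ Q → 1 ≤ Q → Q < Q' → sfun p Q Q = sfun p Q' Q → False := by
    intro Q Q' h1 h0 h2 h4
    unfold sfun at h4
    rw [if_neg (by omega), if_neg (lt_irrefl Q), if_neg (by omega), if_pos h2] at h4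
    omega
  refine ⟨rfl, ?_⟩
  rcases Nat.lt_trichotomy q q' with hlt | hEq | hgt
  · exact absurd (hfun q (by omega)) (fun hc => keyq q q' hpq hq1 hlt hc)
  · exact hEq
  · exact absurd (hfun q' (by omega)).symm (fun hc => keyq q' q hpq' hq1' hgt hc)

lemma domNum_lower {k : ℕ} (S : Finset (Fin (3*k+1)))
    (hd : domSet (pathGraph (3*k+1)) S) : k+1 ≤ S.card := by
  classical
  set t : Fin (3*k+1) → Finset (Fin (3*k+1)) :=
    fun u => univ.filter (fun v => v = u ∨ (pathGraph (3*k+1)).Adj u v) with ht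
  have hcov : (univ : Finset (Fin (3*k+1))) ⊆ S.biUnion t := by
    intro v _
    by_cases hv : v ∈ S
    · exact mem_biUnion.2 ⟨v, hv, mem_filter.2 ⟨mem_univ _, Or.inl rfl⟩⟩
    · obtain ⟨u, hu, hadj⟩ := hd v hv
      exact mem_biUnion.2 ⟨u, hu, mem_filter.2 ⟨mem_univ _, Or.inr hadj⟩⟩
  have hbound : ∀ u : Fin (3*k+1), (t u).card ≤ 3 := by
    intro u
    have hsub : (t u).image Fin.val ⊆ ({u.val - 1, u.val, u.val + 1} : Finset ℕ) := by
      intro m hm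
      simp only [ht, mem_image, mem_filter] at hm
      obtain ⟨v, ⟨_, hv⟩, rfl⟩ := hm
      simp only [mem_insert, mem_singleton]
      rcases hv with rfl | hadj
      · omega
      · rw [pathGraph_adj] at hadj
        omega
    calc (t u).card = ((t u).image Fin.val).card :=
          (card_image_of_injective _ Fin.val_injective).symm
    _ ≤ ({u.val - 1, u.val, u.val + 1} : Finset ℕ).card := card_le_card hsub
    _ ≤ 3 := by
        apply (card_insert_le _ _).trans
        apply Nat.succ_le_succ
        apply (card_insert_le _ _).trans
        simp
  have h2 := card_le_card hcov
  have h3 := card_biUnion_le (s := S) (t := t)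
  have h4 : ∑ u ∈ S, (t u).card ≤ ∑ u ∈ S, 3 := sum_le_sum (fun u _ => hbound u)
  rw [sum_const, smul_eq_mul] at h4
  have h5 : (univ : Finset (Fin (3*k+1))).card = 3*k+1 := by simp
  omega

lemma domNum_eq {k : ℕ} : domNum (pathGraph (3*k+1)) = k+1 := by
  have hwit : ∃ S : Finset (Fin (3*k+1)), domSet (pathGraph (3*k+1)) S ∧ S.card = k+1 :=
    ⟨fset k k (k+1), fset_dom (by omega) (by omega) (le_refl k) (by omega),
      fset_card (by omega) (by omega) (le_refl k)⟩
  apply le_antisymm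
  · exact Nat.sInf_le hwit
  · apply le_csInf ⟨k+1, hwit⟩
    rintro m ⟨S, hS, rfl⟩
    exact domNum_lower S hS

def Fk (k : ℕ) : Finset (ℕ × ℕ) :=
  (range (k+2) ×ˢ range (k+2)).filter (fun x => x.1 ≤ x.2 ∧ 1 ≤ x.2 ∧ x.1 ≤ k)

lemma mem_Fk {k : ℕ} {x : ℕ × ℕ} :
    x ∈ Fk k ↔ x.1 ≤ x.2 ∧ 1 ≤ x.2 ∧ x.1 ≤ k ∧ x.2 ≤ k+1 := by
  simp only [Fk, mem_filter, mem_product, mem_range]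
  omega

lemma Fk_card (k : ℕ) : 2 * (Fk k).card = k^2 + 5*k + 2 := by
  induction k with
  | zero => decide
  | succ m ih =>
    have hsplit : Fk (m+1) =
        (Fk m ∪ (range (m+2)).image (fun p => (p, m+2))) ∪ {(m+1, m+1)} := by
      ext ⟨a, b⟩
      simp only [mem_Fk, mem_union, mem_image, mem_range, mem_singleton, Prod.mk.injEq]
      constructor
      · rintro ⟨h1, h2, h3, h4⟩
        by_cases hq : b = m+2
        · exact Or.inl (Or.inr ⟨a, by omega, rfl, hq.symm⟩)
        · by_cases hpp : a ≤ m
          · exact Or.inl (Or.inl ⟨h1, h2, hpp, by omega⟩)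
          · exact Or.inr ⟨by omega, by omega⟩
      · rintro ((⟨h1, h2, h3, h4⟩ | ⟨c, hc, rfl, rfl⟩) | ⟨rfl, rfl⟩) <;>
          refine ⟨by omega, by omega, by omega, by omega⟩
    have hdisj1 : Disjoint (Fk m) ((range (m+2)).image (fun p => (p, m+2))) := by
      rw [Finset.disjoint_left]
      rintro ⟨a, b⟩ h1 h2
      rw [mem_Fk] at h1
      simp only [mem_image, mem_range, Prod.mk.injEq] at h2
      omega
    have hdisj2 : Disjoint (Fk m ∪ (range (m+2)).image (fun p => (p, m+2)))
        ({(m+1, m+1)} : Finset (ℕ × ℕ)) := by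
      rw [disjoint_right]
      rintro ⟨a, b⟩ h1 h2
      rw [mem_singleton, Prod.mk.injEq] at h1
      rw [mem_union, mem_Fk] at h2
      rcases h2 with h2 | h2
      · omega
      · simp only [mem_image, mem_range, Prod.mk.injEq] at h2
        omega
    have hinj : Function.Injective (fun p : ℕ => (p, m+2)) := by
      intro a b hab
      simpa using congrArg Prod.fst hab
    rw [hsplit, card_union_of_disjoint hdisj2, card_union_of_disjoint hdisj1,
      card_image_of_injective _ hinj, card_range, card_singleton]
    have hpow : (m+1)^2 = m^2 + 2*m + 1 := by ring
    omega

end Stmt8Aux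

theorem stmt8 (n k : ℕ) (hk : 1 ≤ k) (hn : n = 3 * k + 1) :
    dominion (pathGraph n) = (n + 2) * (n + 11) / 18 - 1 ∧
    dominion (pathGraph n) = (k ^ 2 + 5 * k + 2) / 2 := by
  subst hn
  have hdom : domNum (pathGraph (3*k+1)) = k+1 := Stmt8Aux.domNum_eq
  have hbij : dominion (pathGraph (3*k+1)) = (Stmt8Aux.Fk k).card := by
    rw [dominion]
    have hmem' : ∀ x : ℕ × ℕ, x ∈ Stmt8Aux.Fk k →
        x.1 ≤ x.2 ∧ 1 ≤ x.2 ∧ x.1 ≤ k ∧ x.2 ≤ k+1 := fun x hx => Stmt8Aux.mem_Fk.1 hx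
    let φ : {x : ℕ × ℕ // x ∈ Stmt8Aux.Fk k} →
        {S : Finset (Fin (3*k+1)) //
          domSet (pathGraph (3*k+1)) S ∧ S.card = domNum (pathGraph (3*k+1))} := fun x =>
      ⟨Stmt8Aux.fset k x.1.1 x.1.2,
        Stmt8Aux.fset_dom (hmem' _ x.2).1 (hmem' _ x.2).2.1 (hmem' _ x.2).2.2.1
          (hmem' _ x.2).2.2.2,
        by rw [hdom]
           exact Stmt8Aux.fset_card (hmem' _ x.2).1 (hmem' _ x.2).2.1 (hmem' _ x.2).2.2.1⟩
    have hφ : Function.Bijective φ := by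
      constructor
      · rintro ⟨⟨p, q⟩, hx⟩ ⟨⟨p', q'⟩, hx'⟩ hEq
        obtain ⟨h1, h2, h3, h4⟩ := Stmt8Aux.mem_Fk.1 hx
        obtain ⟨h1', h2', h3', h4'⟩ := Stmt8Aux.mem_Fk.1 hx'
        have hval : Stmt8Aux.fset k p q = Stmt8Aux.fset k p' q' := by
          have := congrArg Subtype.val hEq
          simpa [φ] using this
        obtain ⟨hp, hq⟩ := Stmt8Aux.fset_inj h1 h2 h3 h4 h1' h2' h3' h4' hval
        exact Subtype.ext (Prod.ext hp hq)
      · rintro ⟨S, hS, hcard⟩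
        rw [hdom] at hcard
        obtain ⟨p, q, h1, h2, h3, h4, rfl⟩ := Stmt8Aux.structure_thm S hS hcard
        exact ⟨⟨(p, q), Stmt8Aux.mem_Fk.2 ⟨h1, h2, h3, h4⟩⟩, Subtype.ext rfl⟩
    calc Nat.card {S : Finset (Fin (3*k+1)) //
          domSet (pathGraph (3*k+1)) S ∧ S.card = domNum (pathGraph (3*k+1))}
        = Nat.card {x : ℕ × ℕ // x ∈ Stmt8Aux.Fk k} :=
          (Nat.card_congr (Equiv.ofBijective φ hφ)).symm
    _ = (Stmt8Aux.Fk k).card := by rw [Nat.card_eq_fintype_card, Fintype.card_coe]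
  have hcount := Stmt8Aux.Fk_card k
  constructor
  · have h9 : (3*k+1+2) * (3*k+1+11) = 9*k^2 + 45*k + 36 := by ring
    rw [hbij, h9]
    omega
  · rw [hbij]
    omega
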